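/- Let G = (V,E) be a finite simple graph equipped with an orientation of each edge (for each edge exactly one of the two directions is chosen) such that no clique of G contains a directed cycle. Then on each clique x the orientation restricted to x is a transitive tournament, so x has a unique top vertex F(x) ∈ x (the vertex w ∈ x such that every other vertex of x has its edge to w directed towards w). Defining i(v) = Σ_{x clique of G with F(x) = v} (−1)^{|x|−1}, one has Σ_{v ∈ V} i(v) = χ(G). -/

import Mathlib

open Finset
open scoped Classical

/-- The cliques of the graph `G` contained in the vertex set `A`
(nonempty sets of pairwise adjacent vertices). -/
noncomputable def cliquesOn {V : Type*} (G : SimpleGraph V) (A : Finset V) :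
    Finset (Finset V) :=
  A.powerset.filter (fun s => s.Nonempty ∧ G.IsClique (s : Set V))

/-- Euler characteristic of the subgraph of `G` induced on `A`. -/
noncomputable def eulerCharOn {V : Type*} (G : SimpleGraph V) (A : Finset V) : ℤ :=
  ∑ s ∈ cliquesOn G A, (-1) ^ (s.card - 1)

/-- Euler characteristic of a finite simple graph. -/
noncomputable def eulerChar {V : Type*} [Fintype V] (G : SimpleGraph V) : ℤ :=
  eulerCharOn G Finset.univ

lemma exists_sink {V : Type*} (D : V → V → Prop) (x : Finset V)
    (hirr : ∀ u ∈ x, ¬ D u u)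
    (htot : ∀ u ∈ x, ∀ v ∈ x, u ≠ v → D u v ∨ D v u)
    (h3 : ∀ a ∈ x, ∀ b ∈ x, ∀ c ∈ x, D a b → D b c → ¬ D c a)
    (hne : x.Nonempty) : ∃ w ∈ x, ∀ u ∈ x, u ≠ w → D u w := by
  classical
  obtain ⟨w, hw, hmax⟩ := x.exists_max_image (fun w => (x.filter (fun t => D t w)).card) hne
  refine ⟨w, hw, fun u hu hne' => ?_⟩
  by_contra hnd
  have hwu : D w u := (htot u hu w hw hne').resolve_left hnd
  have hsub : x.filter (fun t => D t w) ⊂ x.filter (fun t => D t u) := by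
    constructor
    · intro t ht
      simp only [mem_filter] at ht ⊢
      refine ⟨ht.1, ?_⟩
      by_contra htu
      rcases eq_or_ne t u with rfl | htne
      · exact hnd ht.2
      · have hut : D u t := (htot u hu t ht.1 htne.symm).resolve_right htu
        exact h3 u hu t ht.1 w hw hut ht.2 hwu
    · intro hsub'
      have : w ∈ x.filter (fun t => D t w) := hsub' (by simp [hw, hwu])
      simp only [mem_filter] at this
      exact hirr w hw this.2
  exact absurd (hmax u hu) (not_le.mpr (card_lt_card hsub))

/-- Poincaré–Hopf for digraphs: let `D` be an orientation of the edges of `G`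
(each edge gets exactly one direction) such that no clique contains a directed
cycle.  Then each clique carries a transitive tournament, hence has a unique top
vertex; and for any choice `F` of top vertices, the indices
`i(v) = Σ_{F(x)=v} (−1)^{|x|−1}` sum up to `χ(G)`. -/
theorem poincare_hopf_digraph {V : Type*} [Fintype V] (G : SimpleGraph V)
    (D : V → V → Prop)
    (hDadj : ∀ v w : V, D v w → G.Adj v w)
    (hDor : ∀ v w : V, G.Adj v w → (D v w ↔ ¬ D w v))
    (hacyc : ∀ x ∈ cliquesOn G Finset.univ,
      ¬ ∃ (n : ℕ) (c : Fin (n + 1) → V), (∀ i, c i ∈ x) ∧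
        (∀ i : Fin n, D (c i.castSucc) (c i.succ)) ∧ D (c (Fin.last n)) (c 0)) :
    (∀ x ∈ cliquesOn G Finset.univ,
        ∃! w, w ∈ x ∧ ∀ u ∈ x, u ≠ w → D u w) ∧
    ∀ F : Finset V → V,
      (∀ x ∈ cliquesOn G Finset.univ, F x ∈ x ∧ ∀ u ∈ x, u ≠ F x → D u (F x)) →
      ∑ v : V, ∑ x ∈ (cliquesOn G Finset.univ).filter (fun x => F x = v),
          ((-1 : ℤ) ^ (x.card - 1)) = eulerChar G := by
  constructor
  · intro x hx
    have hx' := hx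
    simp only [cliquesOn, mem_filter, mem_powerset] at hx'
    obtain ⟨-, hne, hcl⟩ := hx'
    have hadj : ∀ u ∈ x, ∀ v ∈ x, u ≠ v → G.Adj u v := fun u hu v hv h =>
      hcl (by simpa using hu) (by simpa using hv) h
    have hirr : ∀ u ∈ x, ¬ D u u := fun u _ h => (hDadj u u h).ne rfl
    have htot : ∀ u ∈ x, ∀ v ∈ x, u ≠ v → D u v ∨ D v u := by
      intro u hu v hv h
      by_contra hc
      push_neg at hc
      exact hc.1 ((hDor u v (hadj u hu v hv h)).mpr hc.2)
    have h3 : ∀ a ∈ x, ∀ b ∈ x, ∀ c ∈ x, D a b → D b c → ¬ D c a := by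
      intro a ha b hb c hc hab hbc hca
      exact hacyc x hx ⟨2, ![a, b, c], by
        refine ⟨?_, ?_, ?_⟩
        · intro i; fin_cases i <;> assumption
        · intro i; fin_cases i <;> simpa
        · simpa⟩
    obtain ⟨w, hw, hws⟩ := exists_sink D x hirr htot h3 hne
    refine ⟨w, ⟨hw, hws⟩, ?_⟩
    rintro w' ⟨hw', hws'⟩
    by_contra hne'
    have h1 := hws w' hw' hne'
    have h2 := hws' w hw (Ne.symm hne')
    exact (hDor w w' (hadj w hw w' hw' (Ne.symm hne'))).mp h2 h1
  · intro F hF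
    rw [eulerChar, eulerCharOn]
    exact Finset.sum_fiberwise_of_maps_to (fun x hx => mem_univ (F x)) _
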